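/- Let Z ∼ ρ on ℝᵈ, A = {x : g(x) ≤ 0}, p = P(g(Z) ≤ 0), and p_σ = E[F_σ(Z)]. Then |p_σ − p| ≤ 2e^{-μ/σ} + P(0 < g(Z) < 2μ). -/

import Mathlib

open MeasureTheory

theorem stmt4 {d : ℕ} {Ω : Type*} [MeasurableSpace Ω] (ℙ : Measure Ω)
    [IsProbabilityMeasure ℙ]
    (g : (Fin d → ℝ) → ℝ) (hg : Measurable g)
    (Z : Ω → (Fin d → ℝ)) (hZ : Measurable Z)
    (σ μ : ℝ) (hσ : 0 < σ) (hμ : 0 < μ)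
    (p pσ : ℝ)
    (hp : p = (ℙ {ω | g (Z ω) ≤ 0}).toReal)
    (hpσ : pσ = ∫ ω, (1 + Real.exp ((-μ + g (Z ω)) / σ))⁻¹ ∂ℙ) :
    |pσ - p| ≤ 2 * Real.exp (-μ / σ) + (ℙ {ω | 0 < g (Z ω) ∧ g (Z ω) < 2 * μ}).toReal := by
  have hgz : Measurable fun ω => g (Z ω) := hg.comp hZ
  set E := Real.exp (-μ / σ) with hE
  have hEpos : 0 < E := Real.exp_pos _
  set A : Set Ω := {ω | g (Z ω) ≤ 0} with hAdef
  set S : Set Ω := {ω | 0 < g (Z ω) ∧ g (Z ω) < 2 * μ} with hSdef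
  have hA : MeasurableSet A := measurableSet_le hgz measurable_const
  have hS : MeasurableSet S :=
    (measurableSet_lt measurable_const hgz).inter (measurableSet_lt hgz measurable_const)
  set F : Ω → ℝ := fun ω => (1 + Real.exp ((-μ + g (Z ω)) / σ))⁻¹ with hFdef
  have hFmeas : Measurable F :=
    (measurable_const.add (((measurable_const.add hgz).div_const σ).exp)).inv
  have hFpos : ∀ ω, 0 < 1 + Real.exp ((-μ + g (Z ω)) / σ) := fun ω => by positivity
  have hF01 : ∀ ω, 0 < F ω ∧ F ω ≤ 1 := by
    intro ω
    refine ⟨inv_pos.mpr (hFpos ω), ?_⟩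
    have hexp : 0 < Real.exp ((-μ + g (Z ω)) / σ) := Real.exp_pos _
    have h1 : (1 : ℝ) ≤ 1 + Real.exp ((-μ + g (Z ω)) / σ) := by linarith
    simpa [hFdef] using inv_le_one_of_one_le₀ h1
  have hbound : ∀ ω, |F ω - A.indicator 1 ω| ≤ E + S.indicator 1 ω := by
    intro ω
    by_cases h0 : g (Z ω) ≤ 0
    · have hAω : A.indicator (1 : Ω → ℝ) ω = 1 := Set.indicator_of_mem h0 1
      have hSω : S.indicator (1 : Ω → ℝ) ω = 0 := by
        apply Set.indicator_of_notMem
        intro hmem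
        exact absurd h0 (not_le.mpr hmem.1)
      set a := Real.exp ((-μ + g (Z ω)) / σ) with ha
      have hapos : 0 < a := Real.exp_pos _
      have haE : a ≤ E := by
        rw [hE, ha]
        exact Real.exp_le_exp.mpr (by
          exact (div_le_div_iff_of_pos_right hσ).mpr (by linarith))
      have hinv : (1 + a) * (1 + a)⁻¹ = 1 := mul_inv_cancel₀ (by linarith)
      have hFω : F ω = (1 + a)⁻¹ := rfl
      rw [hAω, hSω, hFω]
      rw [abs_sub_comm, abs_of_nonneg (by nlinarith [inv_pos.mpr (show (0:ℝ) < 1 + a by linarith)])]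
      nlinarith [inv_pos.mpr (show (0:ℝ) < 1 + a by linarith)]
    · push_neg at h0
      have hAω : A.indicator (1 : Ω → ℝ) ω = 0 :=
        Set.indicator_of_notMem (not_le.mpr h0) 1
      rw [hAω, sub_zero, abs_of_nonneg (hF01 ω).1.le]
      by_cases h2 : g (Z ω) < 2 * μ
      · have hSω : S.indicator (1 : Ω → ℝ) ω = 1 := Set.indicator_of_mem (show ω ∈ S from ⟨h0, h2⟩) 1
        rw [hSω]
        linarith [(hF01 ω).2]
      · push_neg at h2
        have hSω : S.indicator (1 : Ω → ℝ) ω = 0 := by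
          apply Set.indicator_of_notMem
          intro hmem
          exact absurd hmem.2 (not_lt.mpr h2)
        rw [hSω, add_zero]
        set a := Real.exp ((-μ + g (Z ω)) / σ) with ha
        have hapos : 0 < a := Real.exp_pos _
        have h1 : F ω ≤ a⁻¹ := by
          have : a ≤ 1 + a := by linarith
          exact inv_anti₀ hapos this
        have h2' : a⁻¹ = Real.exp (-((-μ + g (Z ω)) / σ)) := by
          rw [ha, ← Real.exp_neg]
        have h3 : Real.exp (-((-μ + g (Z ω)) / σ)) ≤ E := by
          rw [hE]
          apply Real.exp_le_exp.mpr
          rw [neg_div']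
          exact (div_le_div_iff_of_pos_right hσ).mpr (by linarith)
        calc F ω ≤ a⁻¹ := h1
          _ ≤ E := by rw [h2']; exact h3
  have hFint : Integrable F ℙ := by
    apply Integrable.mono' (integrable_const (1 : ℝ)) hFmeas.aestronglyMeasurable
    filter_upwards with ω
    rw [Real.norm_eq_abs, abs_of_nonneg (hF01 ω).1.le]
    exact (hF01 ω).2
  have hindA : Integrable (A.indicator (1 : Ω → ℝ)) ℙ := (integrable_const 1).indicator hA
  have hindS : Integrable (S.indicator (1 : Ω → ℝ)) ℙ := (integrable_const 1).indicator hS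
  have key : pσ - p = ∫ ω, (F ω - A.indicator 1 ω) ∂ℙ := by
    rw [integral_sub hFint hindA, integral_indicator_one hA, hpσ, hp]
    rfl
  have hnorm : |pσ - p| ≤ ∫ ω, (E + S.indicator 1 ω) ∂ℙ := by
    rw [key, ← Real.norm_eq_abs]
    apply norm_integral_le_of_norm_le ((integrable_const E).add hindS)
    filter_upwards with ω
    rw [Real.norm_eq_abs]
    exact hbound ω
  have hval : ∫ ω, (E + S.indicator 1 ω) ∂ℙ = E + (ℙ S).toReal := by
    rw [integral_add (integrable_const E) hindS, integral_indicator_one hS, integral_const]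
    simp
    rfl
  rw [hval] at hnorm
  linarith
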